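/- Let F be a finite field and C ≤ F^Ω a subspace with dim C = k ≥ 1. If C is a constant weight code with respect to ω (wt(α) = wt(β) for all nonzero α, β ∈ C), then Wt(D) = Wt(Q) for all subspaces D, Q ≤ C with dim D = dim Q. -/

import Mathlib

open scoped Classical
open Finset

/-- ω-weight of a vector β ∈ F^Ω. -/
noncomputable def wwt {F Ω : Type*} [Field F] [Fintype Ω] (ω : Ω → ℝ) (β : Ω → F) : ℝ :=
  ∑ i ∈ univ.filter (fun i => β i ≠ 0), ω i

/-- ω-weight of a set A ⊆ F^Ω. -/
noncomputable def WWt {F Ω : Type*} [Field F] [Fintype Ω] (ω : Ω → ℝ) (A : Set (Ω → F)) : ℝ :=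
  ∑ i ∈ univ.filter (fun i => ∃ β ∈ A, β i ≠ 0), ω i

lemma count_aux {F Ω : Type*} [Field F] [Fintype F] [Fintype Ω]
    (D : Submodule F (Ω → F)) (i : Ω) (h : ∃ β ∈ D, β i ≠ 0) :
    ((univ : Finset D).filter (fun β : D => (β : Ω → F) i ≠ 0)).card
      = Fintype.card F ^ Module.finrank F D - Fintype.card F ^ (Module.finrank F D - 1) := by
  set f : D →ₗ[F] F := (LinearMap.proj i).comp D.subtype with hf
  have hrange : LinearMap.range f ≠ ⊥ := by
    obtain ⟨β, hβ, hβi⟩ := h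
    intro hbot
    have hfm : f ⟨β, hβ⟩ ∈ LinearMap.range f := LinearMap.mem_range_self f _
    rw [hbot, Submodule.mem_bot] at hfm
    exact hβi hfm
  have h1 : Module.finrank F (LinearMap.range f) = 1 := by
    have hle : Module.finrank F (LinearMap.range f) ≤ 1 := by
      simpa using Submodule.finrank_le (LinearMap.range f)
    have hne : Module.finrank F (LinearMap.range f) ≠ 0 := by
      intro h0
      exact hrange (Submodule.finrank_eq_zero.mp h0)
    omega
  have hrn := LinearMap.finrank_range_add_finrank_ker f
  have hd1 : 1 ≤ Module.finrank F D := by omega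
  have hker : Module.finrank F (LinearMap.ker f) = Module.finrank F D - 1 := by omega
  have e : ↥(LinearMap.ker f) ≃ {β : D // (β : Ω → F) i = 0} :=
    Equiv.subtypeEquivRight (fun x => by simp [hf, LinearMap.mem_ker])
  have hcard_ker : ((univ : Finset D).filter (fun β : D => (β : Ω → F) i = 0)).card
      = Fintype.card F ^ (Module.finrank F D - 1) :=
    calc ((univ : Finset D).filter (fun β : D => (β : Ω → F) i = 0)).card
        = Fintype.card {β : D // (β : Ω → F) i = 0} := (Fintype.card_subtype _).symm
      _ = Fintype.card (LinearMap.ker f) := (Fintype.card_congr e).symm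
      _ = Fintype.card F ^ Module.finrank F (LinearMap.ker f) := Module.card_eq_pow_finrank (K := F) (V := LinearMap.ker f)
      _ = Fintype.card F ^ (Module.finrank F D - 1) := by rw [hker]
  have hcardD : Fintype.card D = Fintype.card F ^ Module.finrank F D :=
    Module.card_eq_pow_finrank (K := F) (V := D)
  have hsplit := Finset.card_filter_add_card_filter_not
    (s := (univ : Finset D)) (p := fun β : D => (β : Ω → F) i = 0)
  simp only [Finset.card_univ] at hsplit
  have hne : ((univ : Finset D).filter (fun β : D => ¬ (β : Ω → F) i = 0)).card
      = ((univ : Finset D).filter (fun β : D => (β : Ω → F) i ≠ 0)).card := rfl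
  omega

lemma sum_wwt {F Ω : Type*} [Field F] [Fintype F] [Fintype Ω] (ω : Ω → ℝ)
    (D : Submodule F (Ω → F)) :
    ∑ β : D, wwt ω (β : Ω → F)
      = ((Fintype.card F ^ Module.finrank F D
          - Fintype.card F ^ (Module.finrank F D - 1) : ℕ) : ℝ)
        * WWt ω (D : Set (Ω → F)) := by
  set N : ℕ := Fintype.card F ^ Module.finrank F D
      - Fintype.card F ^ (Module.finrank F D - 1) with hN
  unfold wwt WWt
  calc ∑ β : D, ∑ i ∈ univ.filter (fun i => (β : Ω → F) i ≠ 0), ω i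
      = ∑ β : D, ∑ i ∈ univ, if (β : Ω → F) i ≠ 0 then ω i else 0 := by
        simp [Finset.sum_filter]
    _ = ∑ i ∈ univ, ∑ β : D, if (β : Ω → F) i ≠ 0 then ω i else 0 :=
        Finset.sum_comm
    _ = ∑ i ∈ univ,
          (((univ : Finset D).filter (fun β : D => (β : Ω → F) i ≠ 0)).card : ℝ) * ω i := by
        refine Finset.sum_congr rfl fun i _ => ?_
        rw [← Finset.sum_filter, Finset.sum_const, nsmul_eq_mul]
    _ = ∑ i ∈ univ.filter (fun i => ∃ β ∈ (D : Set (Ω → F)), β i ≠ 0),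
          (((univ : Finset D).filter (fun β : D => (β : Ω → F) i ≠ 0)).card : ℝ) * ω i := by
        symm
        refine Finset.sum_filter_of_ne fun i _ hne => ?_
        by_contra hni
        apply hne
        have hemp : (univ : Finset D).filter (fun β : D => (β : Ω → F) i ≠ 0) = ∅ := by
          refine Finset.filter_eq_empty_iff.mpr fun β _ => ?_
          exact fun hb => hni ⟨β, β.2, hb⟩
        rw [hemp]
        simp
    _ = ∑ i ∈ univ.filter (fun i => ∃ β ∈ (D : Set (Ω → F)), β i ≠ 0), (N : ℝ) * ω i := by
        refine Finset.sum_congr rfl fun i hi => ?_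
        rw [Finset.mem_filter] at hi
        obtain ⟨β, hβ, hβi⟩ := hi.2
        rw [count_aux D i ⟨β, hβ, hβi⟩]
    _ = (N : ℝ) * ∑ i ∈ univ.filter (fun i => ∃ β ∈ (D : Set (Ω → F)), β i ≠ 0), ω i := by
        rw [← Finset.mul_sum]
  congr 1
  congr

lemma wwt_zero {F Ω : Type*} [Field F] [Fintype Ω] (ω : Ω → ℝ) :
    wwt ω (0 : Ω → F) = 0 := by simp [wwt]

theorem stmt10 {F Ω : Type*} [Field F] [Fintype F] [Fintype Ω] [Nonempty Ω]
    (ω : Ω → ℝ) (hω : ∀ i, 0 < ω i)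
    (C : Submodule F (Ω → F)) (k : ℕ) (hk : Module.finrank F C = k) (hk1 : 1 ≤ k)
    (hconst : ∀ α ∈ C, ∀ β ∈ C, α ≠ 0 → β ≠ 0 → wwt ω α = wwt ω β)
    (D Q : Submodule F (Ω → F)) (hD : D ≤ C) (hQ : Q ≤ C)
    (hdim : Module.finrank F D = Module.finrank F Q) :
    WWt ω (D : Set (Ω → F)) = WWt ω (Q : Set (Ω → F)) := by
  by_cases hd0 : Module.finrank F D = 0
  · have hDbot : D = ⊥ := Submodule.finrank_eq_zero.mp hd0
    have hQbot : Q = ⊥ := Submodule.finrank_eq_zero.mp (hdim ▸ hd0)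
    rw [hDbot, hQbot]
  · have hd1 : 1 ≤ Module.finrank F D := Nat.one_le_iff_ne_zero.mpr hd0
    have hDne : D ≠ ⊥ := by
      intro h; rw [h] at hd0; simp at hd0
    have hQne : Q ≠ ⊥ := by
      intro h; rw [h] at hdim; simp at hdim; exact hDne hdim
    obtain ⟨α₀, hα₀D, hα₀⟩ := (Submodule.ne_bot_iff D).mp hDne
    set w : ℝ := wwt ω α₀ with hw
    have key : ∀ (P : Submodule F (Ω → F)), P ≤ C → P ≠ ⊥ →
        ∑ β : P, wwt ω (β : Ω → F)
          = ((Fintype.card F ^ Module.finrank F P - 1 : ℕ) : ℝ) * w := by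
      intro P hPC hPne
      have hcardP : Fintype.card P = Fintype.card F ^ Module.finrank F P :=
        Module.card_eq_pow_finrank (K := F) (V := P)
      have hsum : ∑ β : P, wwt ω (β : Ω → F)
          = ∑ β ∈ (univ : Finset P).filter (fun β : P => (β : Ω → F) ≠ 0), w := by
        rw [← Finset.sum_filter_of_ne (p := fun β : P => (β : Ω → F) ≠ 0)]
        · exact Finset.sum_congr rfl fun β hβ =>
            hconst _ (hPC β.2) _ (hD hα₀D) ((Finset.mem_filter.mp hβ).2) hα₀
        · intro β _ hne h0
          rw [h0, wwt_zero] at hne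
          exact hne rfl
      rw [hsum, Finset.sum_const, nsmul_eq_mul]
      congr 1
      have hcardfil : ((univ : Finset P).filter (fun β : P => (β : Ω → F) ≠ 0)).card
          = Fintype.card P - 1 := by
        have hsplit := Finset.card_filter_add_card_filter_not
          (s := (univ : Finset P)) (p := fun β : P => (β : Ω → F) = 0)
        simp only [Finset.card_univ] at hsplit
        have h0card : ((univ : Finset P).filter (fun β : P => (β : Ω → F) = 0)).card = 1 := by
          rw [Finset.card_eq_one]
          refine ⟨0, ?_⟩
          ext β
          simp [Submodule.coe_eq_zero]
        have hne2 : ((univ : Finset P).filter (fun β : P => ¬ (β : Ω → F) = 0)).card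
            = ((univ : Finset P).filter (fun β : P => (β : Ω → F) ≠ 0)).card := rfl
        omega
      rw [hcardfil, hcardP]
    have hDsum := sum_wwt ω D
    have hQsum := sum_wwt ω Q
    rw [key D hD hDne] at hDsum
    rw [key Q hQ hQne] at hQsum
    have hq2 : 2 ≤ Fintype.card F := Fintype.one_lt_card
    have hNpos : 0 < Fintype.card F ^ Module.finrank F D
        - Fintype.card F ^ (Module.finrank F D - 1) := by
      have hlt : Fintype.card F ^ (Module.finrank F D - 1)
          < Fintype.card F ^ Module.finrank F D :=
        Nat.pow_lt_pow_right (by omega) (by omega)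
      omega
    have hNne : ((Fintype.card F ^ Module.finrank F D
        - Fintype.card F ^ (Module.finrank F D - 1) : ℕ) : ℝ) ≠ 0 := by
      exact_mod_cast hNpos.ne'
    apply mul_left_cancel₀ hNne
    rw [← hDsum, hdim, ← hQsum]
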